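/- Let 0 < H < 1 and set C_m = 1/(√(2π) 2^m m!) for integers m ≥ 0. Then Σ_{m≥0} C_m² (2m)! · sup_{n≥2} ( n^{−2} Σ_{1≤i≠j≤n−1} R_H(i/n, j/n)^{2m} (i/n)^{−H(2m+1)} (j/n)^{−H(2m+1)} ) < ∞. -/

import Mathlib

open MeasureTheory Filter Topology Real

/-- Covariance function of fractional Brownian motion with Hurst parameter `H`. -/
noncomputable def RH (H t s : ℝ) : ℝ :=
  (t ^ (2 * H) + s ^ (2 * H) - |t - s| ^ (2 * H)) / 2

/-- `C_m = 1/(√(2π) 2^m m!)`. -/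
noncomputable def Cm (m : ℕ) : ℝ :=
  1 / (Real.sqrt (2 * Real.pi) * 2 ^ m * (Nat.factorial m))

/-- The inner (nonnegative) double sum over `1 ≤ i ≠ j ≤ n−1`. -/
noncomputable def dblSum (H : ℝ) (m n : ℕ) : ℝ :=
  ((n : ℝ) ^ 2)⁻¹ *
    ∑ i ∈ Finset.Ico 1 n, ∑ j ∈ Finset.Ico 1 n,
      if i = j then 0 else
        RH H ((i : ℝ) / n) ((j : ℝ) / n) ^ (2 * m) *
          ((i : ℝ) / n) ^ (-(H * (2 * (m : ℝ) + 1))) *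
          ((j : ℝ) / n) ^ (-(H * (2 * (m : ℝ) + 1)))

lemma sum_rpow_neg_le {r : ℝ} (hr0 : 0 ≤ r) (hr1 : r < 1) (M : ℕ) :
    ∑ i ∈ Finset.Ico 1 (M+1), (i:ℝ) ^ (-r) ≤ (M:ℝ) ^ (1-r) / (1-r) := by
  have h1r : 0 < 1 - r := by linarith
  induction M with
  | zero => simp [Real.zero_rpow h1r.ne']
  | succ M ih =>
    rw [Finset.sum_Ico_succ_top (by omega)]
    push_cast
    have hy : (0:ℝ) < (M:ℝ) + 1 := by positivity
    have hfrac : 1/((M:ℝ)+1) ≤ 1 := by rw [div_le_one hy]; linarith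
    have hpos : (0:ℝ) ≤ 1 + (-(1/((M:ℝ)+1))) := by linarith
    have key : (M:ℝ) ^ (1-r) ≤ ((M:ℝ)+1) ^ (1-r) - (1-r) * ((M:ℝ)+1) ^ (-r) := by
      have hM : (M:ℝ) = ((M:ℝ)+1) * (1 + (-(1/((M:ℝ)+1)))) := by field_simp; ring
      have hb : (1 + (-(1/((M:ℝ)+1)))) ^ (1-r) ≤ 1 + (1-r) * (-(1/((M:ℝ)+1))) :=
        rpow_one_add_le_one_add_mul_self (by linarith) h1r.le (by linarith)
      calc (M:ℝ) ^ (1-r) = ((M:ℝ)+1) ^ (1-r) * (1 + (-(1/((M:ℝ)+1)))) ^ (1-r) := by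
            nth_rewrite 1 [hM]; rw [mul_rpow hy.le hpos]
        _ ≤ ((M:ℝ)+1) ^ (1-r) * (1 + (1-r) * (-(1/((M:ℝ)+1)))) := by
            apply mul_le_mul_of_nonneg_left hb (by positivity)
        _ = ((M:ℝ)+1) ^ (1-r) - (1-r) * (((M:ℝ)+1) ^ (1-r) / ((M:ℝ)+1)) := by ring
        _ = ((M:ℝ)+1) ^ (1-r) - (1-r) * ((M:ℝ)+1) ^ (-r) := by
            rw [← rpow_sub_one hy.ne']; ring_nf
    have h2 : ((M:ℝ)+1) ^ (-r) ≤ (((M:ℝ)+1) ^ (1-r) - (M:ℝ) ^ (1-r)) / (1-r) := by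
      rw [le_div_iff₀ h1r]; nlinarith
    calc ∑ i ∈ Finset.Ico 1 (M+1), (i:ℝ) ^ (-r) + ((M:ℝ)+1) ^ (-r)
        ≤ (M:ℝ) ^ (1-r) / (1-r) + (((M:ℝ)+1) ^ (1-r) - (M:ℝ) ^ (1-r)) / (1-r) :=
          add_le_add ih h2
      _ = ((M:ℝ)+1) ^ (1-r) / (1-r) := by ring

lemma sum_Ico_rpow_le {r : ℝ} (hr0 : 0 ≤ r) (hr1 : r < 1) (M : ℕ) :
    ∑ i ∈ Finset.Ico 1 M, (i:ℝ) ^ (-r) ≤ (M:ℝ) ^ (1-r) / (1-r) := by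
  rcases M with _ | M'
  · simp [Real.zero_rpow (by linarith : 1 - r ≠ 0)]
  · calc ∑ i ∈ Finset.Ico 1 (M'+1), (i:ℝ) ^ (-r) ≤ (M':ℝ) ^ (1-r) / (1-r) :=
        sum_rpow_neg_le hr0 hr1 M'
    _ ≤ ((M'+1:ℕ):ℝ) ^ (1-r) / (1-r) := by
        have hbase : ((M':ℝ)) ^ (1-r) ≤ (((M'+1:ℕ)):ℝ) ^ (1-r) :=
          Real.rpow_le_rpow (by positivity) (by push_cast; linarith) (by linarith)
        have h1r : (0:ℝ) < 1 - r := by linarith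
        exact (div_le_div_iff_of_pos_right h1r).2 hbase

lemma sum_reflect (f : ℕ → ℝ) (j : ℕ) :
    ∑ i ∈ Finset.Ico 1 j, f (j - i) = ∑ i ∈ Finset.Ico 1 j, f i := by
  apply Finset.sum_nbij' (fun i => j - i) (fun i => j - i)
  all_goals intro i hi <;> simp only [Finset.mem_Ico] at * <;> omega

lemma inv_rpow_le2 {r x y : ℝ} (hr : 0 ≤ r) (hx : 0 < x) (hy : 0 < y) (h : x ≤ 2*y) :
    y ^ (-r) ≤ 2 ^ r * x ^ (-r) := by
  have h1 : y⁻¹ ≤ 2 * x⁻¹ := by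
    have h2 : (1:ℝ)/y ≤ 2/x := (div_le_div_iff₀ hy hx).2 (by linarith)
    rwa [one_div, div_eq_mul_inv] at h2
  calc y ^ (-r) = (y⁻¹) ^ r := by rw [Real.inv_rpow hy.le, ← Real.rpow_neg hy.le]
    _ ≤ (2*x⁻¹) ^ r := Real.rpow_le_rpow (by positivity) h1 hr
    _ = 2 ^ r * x ^ (-r) := by
        rw [Real.mul_rpow (by norm_num) (by positivity), Real.inv_rpow hx.le, ← Real.rpow_neg hx.le]

lemma concave_combo {H : ℝ} (hH : 0 < H) (hH' : H < 1) {v : ℝ} (hv : 1 ≤ v) :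
    (1+v) ^ H + 1 ≤ (2:ℝ) ^ H + v ^ H := by
  rcases eq_or_lt_of_le hv with rfl | hv
  · norm_num
  have hv0 : (0:ℝ) < v := by linarith
  set f : ℝ → ℝ := fun x => x ^ H with hf
  have hc := Real.concaveOn_rpow hH.le hH'.le
  have hla : (0:ℝ) ≤ 1/v := by positivity
  have hlb : (0:ℝ) ≤ 1 - 1/v := by
    have : 1/v ≤ 1 := by rw [div_le_one hv0]; linarith
    linarith
  have hab : 1/v + (1 - 1/v) = 1 := by ring
  have h1 : (1/v) * ((v+1:ℝ) ^ H) + (1 - 1/v) * ((1:ℝ) ^ H) ≤ ((1/v) * (v+1) + (1 - 1/v) * 1) ^ H := by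
    have := hc.2 (Set.mem_Ici.2 (by linarith : (0:ℝ) ≤ v+1)) (Set.mem_Ici.2 (by norm_num : (0:ℝ) ≤ 1)) hla hlb hab
    simpa [smul_eq_mul] using this
  have h2 : (1 - 1/v) * ((v+1:ℝ) ^ H) + (1/v) * ((1:ℝ) ^ H) ≤ ((1 - 1/v) * (v+1) + (1/v) * 1) ^ H := by
    have := hc.2 (Set.mem_Ici.2 (by linarith : (0:ℝ) ≤ v+1)) (Set.mem_Ici.2 (by norm_num : (0:ℝ) ≤ 1)) hlb hla (by ring)
    simpa [smul_eq_mul] using this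
  have e1 : (1/v) * (v+1) + (1 - 1/v) * 1 = 2 := by field_simp; ring
  have e2 : (1 - 1/v) * (v+1) + (1/v) * 1 = v := by field_simp; ring
  rw [e1] at h1; rw [e2] at h2
  have := add_le_add h1 h2
  rw [Real.one_rpow] at this
  have heq : (1+v:ℝ) = v + 1 := by ring
  rw [heq]; linarith

lemma gain_lemma {H : ℝ} (hH : 0 < H) (hH' : H < 1) {t u : ℝ} (ht : 0 < t) (htu : t ≤ u) :
    (t+u) ^ H ≤ u ^ H + ((2:ℝ) ^ H - 1) * t ^ H := by
  have hu : (0:ℝ) < u := lt_of_lt_of_le ht htu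
  have hv : 1 ≤ u / t := (one_le_div ht).2 htu
  have h := concave_combo hH hH' hv
  have hsplit : (t+u) ^ H = t ^ H * (1 + u/t) ^ H := by
    rw [← mul_rpow ht.le (by positivity)]
    congr 1; field_simp
  have husplit : u ^ H = t ^ H * (u/t) ^ H := by
    rw [← mul_rpow ht.le (by positivity)]
    congr 1; field_simp
  have htH : (0:ℝ) < t ^ H := rpow_pos_of_pos ht _
  calc (t+u) ^ H = t ^ H * (1 + u/t) ^ H := hsplit
    _ ≤ t ^ H * ((2:ℝ) ^ H + (u/t) ^ H - 1) := by
        apply mul_le_mul_of_nonneg_left (by linarith) htH.le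
    _ = u ^ H + ((2:ℝ) ^ H - 1) * t ^ H := by rw [husplit]; ring

lemma sq_rpow {H x : ℝ} (hx : 0 ≤ x) : x ^ (2*H) = (x ^ H) ^ 2 := by
  rw [← Real.rpow_natCast (x ^ H) 2, ← Real.rpow_mul hx]
  congr 1
  push_cast; ring

lemma alg1 {A B U c : ℝ} (hA : 0 < A) (hB : 0 < B) (hU : 0 < U) (hAB : A ≤ B) (hUB : U ≤ B)
    (hc0 : 0 ≤ c) (hc1 : c ≤ 1) (hg : B ≤ A + (1-c)*U) :
    (A^2+B^2-U^2)/2 ≤ (1 - c/2*(U^2/B^2))*(A*B) := by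
  have h2 : 0 ≤ B - A := by linarith
  have h3 : (B-A)^2 ≤ ((1-c)*U)^2 := pow_le_pow_left₀ h2 (by linarith) 2
  have h5 : ((1-c)*U)^2 ≤ (1-c)*U^2 := by nlinarith [mul_nonneg (mul_nonneg hc0 (sub_nonneg.2 hc1)) (sq_nonneg U)]
  have key : A^2+B^2-U^2 ≤ 2*A*B - c*U^2 := by nlinarith [h3, h5]
  have h6 : (A^2+B^2-U^2)*B ≤ (2*A*B - c*U^2)*B := mul_le_mul_of_nonneg_right key hB.le
  have h7 : c*U^2*A ≤ c*U^2*B := mul_le_mul_of_nonneg_left hAB (by positivity)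
  have hnum : 0 ≤ 2*A*B^2 - c*U^2*A - (A^2+B^2-U^2)*B := by nlinarith [h6, h7]
  have expand : (1 - c/2*(U^2/B^2))*(A*B) - (A^2+B^2-U^2)/2
      = (2*A*B^2 - c*U^2*A - (A^2+B^2-U^2)*B)/(2*B) := by
    field_simp
  nlinarith [div_nonneg hnum (by linarith : (0:ℝ) ≤ 2*B), expand]

lemma alg2 {A B U c : ℝ} (hA : 0 < A) (hB : 0 < B) (hU : 0 < U) (hAB : A ≤ B) (hUB : U ≤ B)
    (hc0 : 0 ≤ c) (hc1 : c ≤ 1) (hAU : A ≤ U) (hg : B ≤ U + (1-c)*A) :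
    (A^2+B^2-U^2)/2 ≤ (1 - c/2*(U^2/B^2))*(A*B) := by
  have h2 : 0 ≤ B - A := by linarith
  have h4 : c*A ≤ U := by nlinarith
  have h3 : (B-A)^2 ≤ (U-c*A)^2 := pow_le_pow_left₀ h2 (by linarith) 2
  have h5 : (U-c*A)^2 ≤ U^2 - c*A*U := by nlinarith [mul_le_mul_of_nonneg_left h4 (mul_nonneg hc0 hA.le)]
  have key : A^2+B^2-U^2 ≤ 2*A*B - c*A*U := by nlinarith [h3, h5]
  have h6 : (A^2+B^2-U^2)*B ≤ (2*A*B - c*A*U)*B := mul_le_mul_of_nonneg_right key hB.le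
  have h7 : c*A*U*U ≤ c*A*U*B := mul_le_mul_of_nonneg_left hUB (by positivity)
  have hnum : 0 ≤ 2*A*B^2 - c*U^2*A - (A^2+B^2-U^2)*B := by nlinarith [h6, h7]
  have expand : (1 - c/2*(U^2/B^2))*(A*B) - (A^2+B^2-U^2)/2
      = (2*A*B^2 - c*U^2*A - (A^2+B^2-U^2)*B)/(2*B) := by
    field_simp
  nlinarith [div_nonneg hnum (by linarith : (0:ℝ) ≤ 2*B), expand]

lemma RH_nonneg {H : ℝ} (hH : 0 < H) {t s : ℝ} (ht : 0 ≤ t) (hts : t ≤ s) :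
    0 ≤ RH H t s := by
  have h1 : |t - s| = s - t := by rw [abs_sub_comm]; exact abs_of_nonneg (by linarith)
  have h2 : (s - t) ^ (2*H) ≤ s ^ (2*H) :=
    Real.rpow_le_rpow (by linarith) (by linarith) (by positivity)
  have h3 : (0:ℝ) ≤ t ^ (2*H) := Real.rpow_nonneg ht _
  unfold RH; rw [h1]; linarith

lemma RH_le {H : ℝ} (hH : 0 < H) (hH' : H < 1) {t s : ℝ} (ht : 0 < t) (hts : t < s) :
    RH H t s ≤ (1 - ((2 - (2:ℝ)^H)/2) * (((s-t)/s) ^ (2*H))) * (t ^ H * s ^ H) := by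
  have hs : (0:ℝ) < s := lt_trans ht hts
  have hu : (0:ℝ) < s - t := by linarith
  have h2H1 : (1:ℝ) < (2:ℝ)^H := by
    calc (1:ℝ) = (2:ℝ) ^ (0:ℝ) := by norm_num
    _ < (2:ℝ)^H := Real.rpow_lt_rpow_of_exponent_lt one_lt_two hH
  have h2H2 : (2:ℝ)^H < 2 := by
    calc (2:ℝ)^H < (2:ℝ) ^ (1:ℝ) := Real.rpow_lt_rpow_of_exponent_lt one_lt_two hH'
    _ = 2 := by norm_num
  have hApos : 0 < t ^ H := rpow_pos_of_pos ht _
  have hBpos : 0 < s ^ H := rpow_pos_of_pos hs _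
  have hUpos : 0 < (s-t) ^ H := rpow_pos_of_pos hu _
  have hAB : t ^ H ≤ s ^ H := Real.rpow_le_rpow ht.le hts.le hH.le
  have hUB : (s-t) ^ H ≤ s ^ H := Real.rpow_le_rpow hu.le (by linarith) hH.le
  have habs : |t - s| = s - t := by rw [abs_sub_comm]; exact abs_of_nonneg hu.le
  have hRH : RH H t s = ((t^H)^2 + (s^H)^2 - ((s-t)^H)^2)/2 := by
    unfold RH
    rw [habs, sq_rpow ht.le, sq_rpow hs.le, sq_rpow hu.le]
  have hθ : ((s-t)/s) ^ (2*H) = ((s-t)^H)^2/(s^H)^2 := by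
    rw [Real.div_rpow hu.le hs.le, sq_rpow hu.le, sq_rpow hs.le]
  rw [hRH, hθ]
  rcases le_total (s - t) t with hcase | hcase
  · have hg : s ^ H ≤ t ^ H + (1-(2 - (2:ℝ)^H))*(s-t)^H := by
      have h := gain_lemma hH hH' hu hcase
      have he : (s - t) + t = s := by ring
      rw [he] at h; linarith
    exact alg1 hApos hBpos hUpos hAB hUB (by linarith) (by linarith) hg
  · have hAU : t ^ H ≤ (s-t) ^ H := Real.rpow_le_rpow ht.le hcase hH.le
    have hg : s ^ H ≤ (s-t) ^ H + (1-(2 - (2:ℝ)^H))*t^H := by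
      have h := gain_lemma hH hH' ht hcase
      have he : t + (s - t) = s := by ring
      rw [he] at h; linarith
    exact alg2 hApos hBpos hUpos hAB hUB (by linarith) (by linarith) hAU hg

lemma rpow_le_exp_aux {q x : ℝ} (hq : 0 ≤ q) (hx : 0 < x) :
    x ^ q ≤ ((Nat.ceil q).factorial + 1 : ℝ) * Real.exp x := by
  have hfac : (1:ℝ) ≤ ((Nat.ceil q).factorial : ℝ) := by
    exact_mod_cast Nat.one_le_iff_ne_zero.2 (Nat.factorial_ne_zero _)
  rcases le_total x 1 with hx1 | hx1
  · have h1 : x ^ q ≤ 1 := Real.rpow_le_one hx.le hx1 hq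
    have h2 : (1:ℝ) ≤ Real.exp x := Real.one_le_exp hx.le
    nlinarith [Real.exp_pos x]
  · have h1 : x ^ q ≤ x ^ ((Nat.ceil q : ℕ):ℝ) :=
      Real.rpow_le_rpow_of_exponent_le hx1 (Nat.le_ceil q)
    rw [Real.rpow_natCast] at h1
    have h2 : x ^ (Nat.ceil q) / ((Nat.ceil q).factorial : ℝ) ≤ Real.exp x :=
      Real.pow_div_factorial_le_exp x (by linarith) (Nat.ceil q)
    rw [div_le_iff₀ (by linarith)] at h2
    calc x ^ q ≤ x ^ (Nat.ceil q) := h1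
      _ ≤ Real.exp x * ((Nat.ceil q).factorial:ℝ) := h2
      _ ≤ ((Nat.ceil q).factorial + 1 : ℝ) * Real.exp x := by nlinarith [Real.exp_pos x]

lemma exp_neg_le {q x : ℝ} (hq : 0 ≤ q) (hx : 0 < x) :
    Real.exp (-x) ≤ ((Nat.ceil q).factorial + 1 : ℝ) * x ^ (-q) := by
  have h := rpow_le_exp_aux hq hx
  have hxq : 0 < x ^ q := Real.rpow_pos_of_pos hx _
  rw [Real.rpow_neg hx.le, ← div_eq_mul_inv, le_div_iff₀ hxq, Real.exp_neg]
  calc (Real.exp x)⁻¹ * x ^ q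
      ≤ (Real.exp x)⁻¹ * (((Nat.ceil q).factorial + 1 : ℝ) * Real.exp x) :=
        mul_le_mul_of_nonneg_left h (by positivity)
    _ = ((Nat.ceil q).factorial + 1 : ℝ) := by field_simp

lemma term_bound {H q : ℝ} (hH : 0 < H) (hH' : H < 1) (hq : 0 < q) {t s : ℝ}
    (ht : 0 < t) (hts : t < s) {m : ℕ} (hm : 1 ≤ m) :
    RH H t s ^ (2*m) * t ^ (-(H * (2 * (m:ℝ) + 1))) * s ^ (-(H * (2 * (m:ℝ) + 1)))
      ≤ (((Nat.ceil q).factorial + 1 : ℝ) * (2/(2 - (2:ℝ)^H)) ^ q) * (m:ℝ) ^ (-q)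
          * ((s-t)/s) ^ (-(2*H*q)) * (t ^ (-H) * s ^ (-H)) := by
  have hs : (0:ℝ) < s := lt_trans ht hts
  have hu : (0:ℝ) < s - t := by linarith
  have h2H1 : (1:ℝ) < (2:ℝ)^H := by
    calc (1:ℝ) = (2:ℝ) ^ (0:ℝ) := by norm_num
    _ < (2:ℝ)^H := Real.rpow_lt_rpow_of_exponent_lt one_lt_two hH
  have h2H2 : (2:ℝ)^H < 2 := by
    calc (2:ℝ)^H < (2:ℝ) ^ (1:ℝ) := Real.rpow_lt_rpow_of_exponent_lt one_lt_two hH'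
    _ = 2 := by norm_num
  set c : ℝ := 2 - (2:ℝ)^H with hc
  have hc0 : 0 < c := by rw [hc]; linarith
  have hc1 : c < 1 := by rw [hc]; linarith
  set θ : ℝ := ((s-t)/s) ^ (2*H) with hθ
  have hθ0 : 0 < θ := Real.rpow_pos_of_pos (by positivity) _
  have hθ1 : θ ≤ 1 := Real.rpow_le_one (by positivity) (by rw [div_le_one hs]; linarith) (by positivity)
  set β : ℝ := c/2 * θ with hβ
  have hβ0 : 0 < β := by positivity
  have hβ1 : β ≤ 1/2 := by nlinarith
  -- step 1 : RH ^ (2m) ≤ (1-β)^(2m) * (t^H)^(2m) * (s^H)^(2m)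
  have hRHle : RH H t s ≤ (1-β) * (t ^ H * s ^ H) := RH_le hH hH' ht hts
  have hpow : RH H t s ^ (2*m) ≤ ((1-β) * (t ^ H * s ^ H)) ^ (2*m) :=
    pow_le_pow_left₀ (RH_nonneg hH ht.le hts.le) hRHle _
  have hexpand : ((1-β) * (t ^ H * s ^ H)) ^ (2*m)
      = (1-β)^(2*m) * ((t^H)^(2*m) * (s^H)^(2*m)) := by rw [mul_pow, mul_pow]
  -- step 2 : rpow algebra
  have hts' : (t^H)^(2*m) * t ^ (-(H * (2 * (m:ℝ) + 1))) = t ^ (-H) := by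
    rw [← Real.rpow_natCast (t ^ H) (2*m), ← Real.rpow_mul ht.le, ← Real.rpow_add ht]
    congr 1; push_cast; ring
  have hss' : (s^H)^(2*m) * s ^ (-(H * (2 * (m:ℝ) + 1))) = s ^ (-H) := by
    rw [← Real.rpow_natCast (s ^ H) (2*m), ← Real.rpow_mul hs.le, ← Real.rpow_add hs]
    congr 1; push_cast; ring
  -- step 3 : (1-β)^(2m) ≤ Kf * m^{-q} * β^{-q}
  have hexp1 : (1-β)^(2*m) ≤ Real.exp (-((m:ℝ)*β)) := by
    have h1 : 1 - β ≤ Real.exp (-β) := by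
      have := Real.add_one_le_exp (-β); linarith
    have h2 : (1-β)^(2*m) ≤ (Real.exp (-β))^(2*m) := pow_le_pow_left₀ (by linarith) h1 _
    have h3 : (Real.exp (-β))^(2*m) = Real.exp (-((2*m:ℕ)*β)) := by
      rw [← Real.exp_nat_mul]; congr 1; push_cast; ring
    rw [h3] at h2
    apply le_trans h2
    apply Real.exp_le_exp.2
    have : (m:ℝ) ≥ 1 := by exact_mod_cast hm
    push_cast
    nlinarith
  have hexp2 : Real.exp (-((m:ℝ)*β)) ≤ ((Nat.ceil q).factorial + 1 : ℝ) * ((m:ℝ)*β) ^ (-q) := by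
    apply exp_neg_le hq.le
    have : (0:ℝ) < (m:ℝ) := by exact_mod_cast hm
    positivity
  have hm0 : (0:ℝ) < (m:ℝ) := by exact_mod_cast hm
  have hsplit : ((m:ℝ)*β) ^ (-q) = (m:ℝ)^(-q) * β^(-q) := Real.mul_rpow hm0.le hβ0.le ▸ by
    rw [Real.mul_rpow hm0.le hβ0.le]
  have hβq : β ^ (-q) = (2/c)^q * ((s-t)/s) ^ (-(2*H*q)) := by
    rw [hβ, Real.mul_rpow (by positivity) hθ0.le, hθ]
    have e1 : (((s-t)/s) ^ (2*H)) ^ (-q) = ((s-t)/s) ^ (-(2*H*q)) := by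
      rw [← Real.rpow_mul (by positivity)]; congr 1; ring
    have e2 : (c/2) ^ (-q) = (2/c)^q := by
      rw [Real.rpow_neg (by positivity), ← Real.inv_rpow (by positivity), inv_div]
    rw [e1, e2]
  have hXt : 0 ≤ t ^ (-(H * (2 * (m:ℝ) + 1))) := Real.rpow_nonneg ht.le _
  have hXs : 0 ≤ s ^ (-(H * (2 * (m:ℝ) + 1))) := Real.rpow_nonneg hs.le _
  calc RH H t s ^ (2*m) * t ^ (-(H * (2 * (m:ℝ) + 1))) * s ^ (-(H * (2 * (m:ℝ) + 1)))
      ≤ ((1-β) * (t ^ H * s ^ H)) ^ (2*m) * t ^ (-(H * (2 * (m:ℝ) + 1))) * s ^ (-(H * (2 * (m:ℝ) + 1))) :=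
        mul_le_mul_of_nonneg_right (mul_le_mul_of_nonneg_right hpow hXt) hXs
    _ = (1-β)^(2*m) * (t ^ (-H) * s ^ (-H)) := by rw [hexpand, ← hts', ← hss']; ring
    _ ≤ (((Nat.ceil q).factorial + 1 : ℝ) * ((m:ℝ)*β) ^ (-q)) * (t ^ (-H) * s ^ (-H)) :=
        mul_le_mul_of_nonneg_right (le_trans hexp1 hexp2)
          (mul_nonneg (Real.rpow_nonneg ht.le _) (Real.rpow_nonneg hs.le _))
    _ = (((Nat.ceil q).factorial + 1 : ℝ) * (2/(2 - (2:ℝ)^H)) ^ q) * (m:ℝ) ^ (-q)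
          * ((s-t)/s) ^ (-(2*H*q)) * (t ^ (-H) * s ^ (-H)) := by
        rw [hsplit, hβq, hc]; ring

lemma inner_sum_le {H a : ℝ} (hH0 : 0 < H) (hH1 : H < 1) (ha0 : 0 < a) (ha1 : a < 1)
    (j : ℕ) :
    ∑ i ∈ Finset.Ico 1 j, ((j:ℝ)-(i:ℝ))^(-a) * (i:ℝ)^(-H)
      ≤ ((2:ℝ)^a/(1-H) + (2:ℝ)^H/(1-a)) * (j:ℝ)^(1-a-H) := by
  rcases Nat.eq_zero_or_pos j with rfl | hj
  · simp only [Nat.cast_zero, Finset.Ico_self, Finset.sum_empty]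
    apply mul_nonneg _ (Real.rpow_nonneg le_rfl _)
    have h1 : (0:ℝ) < 1-H := by linarith
    have h2 : (0:ℝ) < 1-a := by linarith
    positivity
  have hjR : (0:ℝ) < (j:ℝ) := by exact_mod_cast hj
  have step1 : ∀ i ∈ Finset.Ico 1 j, ((j:ℝ)-(i:ℝ))^(-a) * (i:ℝ)^(-H)
      ≤ (2:ℝ)^a*(j:ℝ)^(-a) * (i:ℝ)^(-H) + (2:ℝ)^H*(j:ℝ)^(-H) * ((j:ℝ)-(i:ℝ))^(-a) := by
    intro i hi
    simp only [Finset.mem_Ico] at hi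
    have hiR : (0:ℝ) < (i:ℝ) := by exact_mod_cast hi.1
    have hij : (i:ℝ) < (j:ℝ) := by exact_mod_cast hi.2
    have hdiff : (0:ℝ) < (j:ℝ)-(i:ℝ) := by linarith
    rcases le_total (j:ℝ) (2*(i:ℝ)) with hcase | hcase
    · have hle : (i:ℝ)^(-H) ≤ (2:ℝ)^H*(j:ℝ)^(-H) := inv_rpow_le2 hH0.le hjR hiR hcase
      have h2 := mul_le_mul_of_nonneg_left hle (Real.rpow_nonneg hdiff.le (-a))
      have h3 : (0:ℝ) ≤ (2:ℝ)^a*(j:ℝ)^(-a) * (i:ℝ)^(-H) := by positivity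
      nlinarith [h2, h3]
    · have hle : ((j:ℝ)-(i:ℝ))^(-a) ≤ (2:ℝ)^a*(j:ℝ)^(-a) :=
        inv_rpow_le2 ha0.le hjR hdiff (by linarith)
      have h2 := mul_le_mul_of_nonneg_right hle (Real.rpow_nonneg hiR.le (-H))
      have h3 : (0:ℝ) ≤ (2:ℝ)^H*(j:ℝ)^(-H) * ((j:ℝ)-(i:ℝ))^(-a) := by positivity
      nlinarith [h2, h3]
  have step2 := Finset.sum_le_sum step1
  rw [Finset.sum_add_distrib] at step2
  have e1 : ∑ i ∈ Finset.Ico 1 j, (2:ℝ)^a*(j:ℝ)^(-a) * (i:ℝ)^(-H)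
      = (2:ℝ)^a*(j:ℝ)^(-a) * ∑ i ∈ Finset.Ico 1 j, (i:ℝ)^(-H) := by
    rw [Finset.mul_sum]
  have e2 : ∑ i ∈ Finset.Ico 1 j, (2:ℝ)^H*(j:ℝ)^(-H) * ((j:ℝ)-(i:ℝ))^(-a)
      = (2:ℝ)^H*(j:ℝ)^(-H) * ∑ i ∈ Finset.Ico 1 j, ((j:ℝ)-(i:ℝ))^(-a) := by
    rw [Finset.mul_sum]
  have e3 : ∑ i ∈ Finset.Ico 1 j, ((j:ℝ)-(i:ℝ))^(-a) = ∑ i ∈ Finset.Ico 1 j, (i:ℝ)^(-a) := by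
    rw [show (∑ i ∈ Finset.Ico 1 j, ((j:ℝ)-(i:ℝ))^(-a))
        = ∑ i ∈ Finset.Ico 1 j, (((j-i:ℕ)):ℝ)^(-a) from ?_]
    · exact sum_reflect (fun k => (k:ℝ)^(-a)) j
    · apply Finset.sum_congr rfl
      intro i hi
      simp only [Finset.mem_Ico] at hi
      congr 1
      rw [Nat.cast_sub (by omega)]
  have s1 : ∑ i ∈ Finset.Ico 1 j, (i:ℝ)^(-H) ≤ (j:ℝ)^(1-H)/(1-H) :=
    sum_Ico_rpow_le hH0.le hH1 j
  have s2 : ∑ i ∈ Finset.Ico 1 j, (i:ℝ)^(-a) ≤ (j:ℝ)^(1-a)/(1-a) :=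
    sum_Ico_rpow_le ha0.le ha1 j
  have m1 : (2:ℝ)^a*(j:ℝ)^(-a) * ((j:ℝ)^(1-H)/(1-H)) = (2:ℝ)^a/(1-H) * (j:ℝ)^(1-a-H) := by
    rw [show (1-a-H) = (-a) + (1-H) by ring, Real.rpow_add hjR]; ring
  have m2 : (2:ℝ)^H*(j:ℝ)^(-H) * ((j:ℝ)^(1-a)/(1-a)) = (2:ℝ)^H/(1-a) * (j:ℝ)^(1-a-H) := by
    rw [show (1-a-H) = (-H) + (1-a) by ring, Real.rpow_add hjR]; ring
  calc ∑ i ∈ Finset.Ico 1 j, ((j:ℝ)-(i:ℝ))^(-a) * (i:ℝ)^(-H)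
      ≤ (2:ℝ)^a*(j:ℝ)^(-a) * (∑ i ∈ Finset.Ico 1 j, (i:ℝ)^(-H))
        + (2:ℝ)^H*(j:ℝ)^(-H) * (∑ i ∈ Finset.Ico 1 j, (i:ℝ)^(-a)) := by
        rw [← e1, ← e3, ← e2]; exact step2
    _ ≤ (2:ℝ)^a*(j:ℝ)^(-a) * ((j:ℝ)^(1-H)/(1-H)) + (2:ℝ)^H*(j:ℝ)^(-H) * ((j:ℝ)^(1-a)/(1-a)) := by
        apply add_le_add
        · exact mul_le_mul_of_nonneg_left s1 (by positivity)
        · exact mul_le_mul_of_nonneg_left s2 (by positivity)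
    _ = ((2:ℝ)^a/(1-H) + (2:ℝ)^H/(1-a)) * (j:ℝ)^(1-a-H) := by rw [m1, m2]; ring

lemma jsum_le {H : ℝ} (hH0 : 0 < H) (hH1 : H < 1) (n : ℕ) :
    ∑ j ∈ Finset.Ico 1 n, (j:ℝ)^(1-2*H) ≤ (1/(2-2*H) + 1) * (n:ℝ)^(2-2*H) := by
  have hco : (1:ℝ) ≤ 1/(2-2*H) + 1 := by
    have : (0:ℝ) < 2-2*H := by linarith
    have : (0:ℝ) ≤ 1/(2-2*H) := by positivity
    linarith
  rcases Nat.eq_zero_or_pos n with rfl | hn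
  · simp only [Nat.cast_zero, Finset.Ico_self, Finset.sum_empty]
    have h2 : (0:ℝ) < 2-2*H := by linarith
    have h3 : (0:ℝ) ≤ (2-2*H)⁻¹ := inv_nonneg.2 h2.le
    apply mul_nonneg (by rw [one_div]; linarith) (Real.rpow_nonneg le_rfl _)
  have hnR : (0:ℝ) < (n:ℝ) := by exact_mod_cast hn
  rcases le_total (2*H) 1 with hcase | hcase
  · have hb : ∀ j ∈ Finset.Ico 1 n, (j:ℝ)^(1-2*H) ≤ (n:ℝ)^(1-2*H) := by
      intro j hj
      simp only [Finset.mem_Ico] at hj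
      exact Real.rpow_le_rpow (by positivity) (by exact_mod_cast hj.2.le) (by linarith)
    calc ∑ j ∈ Finset.Ico 1 n, (j:ℝ)^(1-2*H)
        ≤ ∑ _j ∈ Finset.Ico 1 n, (n:ℝ)^(1-2*H) := Finset.sum_le_sum hb
      _ = ((n-1:ℕ):ℝ) * (n:ℝ)^(1-2*H) := by
          rw [Finset.sum_const, Nat.card_Ico]; simp [nsmul_eq_mul]
      _ ≤ (n:ℝ) * (n:ℝ)^(1-2*H) := by
          apply mul_le_mul_of_nonneg_right _ (by positivity)
          exact_mod_cast Nat.sub_le n 1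
      _ = (n:ℝ)^(2-2*H) := by
          rw [show (2-2*H) = 1 + (1-2*H) by ring, Real.rpow_add hnR, Real.rpow_one]
      _ ≤ (1/(2-2*H) + 1) * (n:ℝ)^(2-2*H) := by
          nlinarith [Real.rpow_nonneg hnR.le (2-2*H), hco]
  · have e : ∀ j ∈ Finset.Ico 1 n, (j:ℝ)^(1-2*H) = (j:ℝ)^(-(2*H-1)) := by
      intro j _; congr 1; ring
    rw [Finset.sum_congr rfl e]
    calc ∑ j ∈ Finset.Ico 1 n, (j:ℝ)^(-(2*H-1))
        ≤ (n:ℝ)^(1-(2*H-1))/(1-(2*H-1)) := sum_Ico_rpow_le (by linarith) (by linarith) n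
      _ ≤ (1/(2-2*H) + 1) * (n:ℝ)^(2-2*H) := by
          rw [show (1-(2*H-1)) = 2-2*H by ring]
          rw [div_eq_mul_inv, mul_comm]
          apply mul_le_mul_of_nonneg_right _ (Real.rpow_nonneg hnR.le _)
          rw [← one_div]
          linarith

lemma RH_symm (H t s : ℝ) : RH H t s = RH H s t := by
  unfold RH; rw [abs_sub_comm]; ring

lemma div_rpow_neg {x y r : ℝ} (hx : 0 < x) (hy : 0 < y) : (x/y)^(-r) = y^r * x^(-r) := by
  rw [Real.rpow_neg (by positivity), Real.div_rpow hx.le hy.le, inv_div, div_eq_mul_inv,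
    ← Real.rpow_neg hx.le]

lemma dblSum_le_aux {H : ℝ} (hH : 0 < H) (hH' : H < 1) {m : ℕ} (hm : 1 ≤ m) (n : ℕ) :
    dblSum H m n ≤
      2 * ((((Nat.ceil ((1+H)/(4*H))).factorial + 1 : ℝ) * (2/(2 - (2:ℝ)^H)) ^ ((1+H)/(4*H)))
        * ((2:ℝ)^((1+H)/2)/(1-H) + (2:ℝ)^H/(1-(1+H)/2)) * (1/(2-2*H)+1))
        * (m:ℝ) ^ (-((1+H)/(4*H))) := by
  have h2H1 : (1:ℝ) < (2:ℝ)^H := by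
    calc (1:ℝ) = (2:ℝ) ^ (0:ℝ) := by norm_num
    _ < (2:ℝ)^H := Real.rpow_lt_rpow_of_exponent_lt one_lt_two hH
  have h2H2 : (2:ℝ)^H < 2 := by
    calc (2:ℝ)^H < (2:ℝ) ^ (1:ℝ) := Real.rpow_lt_rpow_of_exponent_lt one_lt_two hH'
    _ = 2 := by norm_num
  set q : ℝ := (1+H)/(4*H) with hqdef
  set a : ℝ := (1+H)/2 with hadef
  have hq0 : 0 < q := by rw [hqdef]; positivity
  have ha0 : 0 < a := by rw [hadef]; positivity
  have ha1 : a < 1 := by rw [hadef]; linarith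
  have haq : 2*H*q = a := by rw [hqdef, hadef]; field_simp; ring
  set cK : ℝ := ((Nat.ceil q).factorial + 1 : ℝ) * (2/(2 - (2:ℝ)^H)) ^ q with hcK
  have hcK0 : 0 < cK := by
    rw [hcK]
    have hfac : (0:ℝ) < ((Nat.ceil q).factorial : ℝ) := by
      exact_mod_cast (Nat.ceil q).factorial_pos
    have h2c : (0:ℝ) < 2/(2 - (2:ℝ)^H) := by
      apply div_pos (by norm_num); linarith
    positivity
  set D : ℝ := (2:ℝ)^a/(1-H) + (2:ℝ)^H/(1-a) with hD
  have hD0 : 0 < D := by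
    rw [hD]
    have h1 : (0:ℝ) < 1-H := by linarith
    have h2 : (0:ℝ) < 1-a := by linarith
    positivity
  set C3 : ℝ := 1/(2-2*H)+1 with hC3
  have hC30 : 0 < C3 := by
    rw [hC3]
    have h1 : (0:ℝ) < 2-2*H := by linarith
    positivity
  have hmR : (0:ℝ) < (m:ℝ) := by exact_mod_cast hm
  have hmq : (0:ℝ) ≤ (m:ℝ) ^ (-q) := Real.rpow_nonneg hmR.le _
  have hRHS0 : (0:ℝ) ≤ 2 * (cK * D * C3) * (m:ℝ)^(-q) := by
    apply mul_nonneg _ hmq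
    nlinarith [mul_pos (mul_pos hcK0 hD0) hC30]
  rcases Nat.eq_zero_or_pos n with rfl | hn
  · unfold dblSum
    simp only [show Finset.Ico 1 0 = ∅ from Finset.Ico_eq_empty (by omega), Finset.sum_empty,
      mul_zero]
    exact hRHS0
  have hnR : (0:ℝ) < (n:ℝ) := by exact_mod_cast hn
  set S := Finset.Ico 1 n with hS
  set g : ℕ → ℕ → ℝ := fun i j =>
    if i = j then 0 else
      RH H ((i : ℝ) / n) ((j : ℝ) / n) ^ (2 * m) *
        ((i : ℝ) / n) ^ (-(H * (2 * (m : ℝ) + 1))) *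
        ((j : ℝ) / n) ^ (-(H * (2 * (m : ℝ) + 1))) with hg
  set ψ : ℕ → ℕ → ℝ := fun i j =>
    cK * (m:ℝ)^(-q) * ((n:ℝ)^(2*H) * ((j:ℝ)^a * ((j:ℝ)-(i:ℝ))^(-a)) * ((i:ℝ)^(-H) * (j:ℝ)^(-H)))
    with hψ
  set φ : ℕ → ℕ → ℝ := fun i j => if i < j then ψ i j else 0 with hφ
  have hψ_nonneg : ∀ i j : ℕ, 1 ≤ i → i < j → 0 ≤ ψ i j := by
    intro i j hi hij
    have h1 : (0:ℝ) < (i:ℝ) := by exact_mod_cast hi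
    have h2 : (0:ℝ) < (j:ℝ) := by
      have : (0:ℕ) < j := by omega
      exact_mod_cast this
    have h3 : (0:ℝ) < (j:ℝ)-(i:ℝ) := by
      have : (i:ℝ) < (j:ℝ) := by exact_mod_cast hij
      linarith
    rw [hψ]
    exact mul_nonneg (mul_nonneg hcK0.le hmq) (by positivity)
  have hφ_nonneg : ∀ i j : ℕ, 1 ≤ i → 0 ≤ φ i j := by
    intro i j hi
    rw [hφ]
    by_cases h : i < j
    · simpa [h] using hψ_nonneg i j hi h
    · simp [h]
  have key : ∀ i j : ℕ, i ∈ S → j ∈ S → i < j → g i j ≤ ψ i j := by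
    intro i j hiS hjS hij
    rw [hS, Finset.mem_Ico] at hiS hjS
    have hiR : (0:ℝ) < (i:ℝ) := by exact_mod_cast hiS.1
    have hijR : (i:ℝ) < (j:ℝ) := by exact_mod_cast hij
    have hjR : (0:ℝ) < (j:ℝ) := lt_trans hiR hijR
    have ht : (0:ℝ) < (i:ℝ)/n := by positivity
    have hts : (i:ℝ)/n < (j:ℝ)/n := by
      apply div_lt_div_of_pos_right hijR hnR
    have h := term_bound hH hH' hq0 ht hts hm
    have hne : i ≠ j := Nat.ne_of_lt hij
    rw [hg]
    simp only [if_neg hne]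
    refine le_trans h (le_of_eq ?_)
    have e1 : ((j:ℝ)/n - (i:ℝ)/n)/((j:ℝ)/n) = ((j:ℝ)-(i:ℝ))/(j:ℝ) := by
      field_simp
    have hdiffR : (0:ℝ) < (j:ℝ)-(i:ℝ) := by linarith
    have e2 : (((j:ℝ)-(i:ℝ))/(j:ℝ))^(-(2*H*q)) = (j:ℝ)^a * ((j:ℝ)-(i:ℝ))^(-a) := by
      rw [haq, div_rpow_neg hdiffR hjR]
    have e3 : ((i:ℝ)/n)^(-H) = (n:ℝ)^H * (i:ℝ)^(-H) := div_rpow_neg hiR hnR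
    have e4 : ((j:ℝ)/n)^(-H) = (n:ℝ)^H * (j:ℝ)^(-H) := div_rpow_neg hjR hnR
    have e5 : (n:ℝ)^H * (n:ℝ)^H = (n:ℝ)^(2*H) := by
      rw [← Real.rpow_add hnR]; congr 1; ring
    rw [e1, e2, e3, e4, hψ, hcK]
    simp only
    rw [← e5]
    ring
  have pointwise : ∀ i ∈ S, ∀ j ∈ S, g i j ≤ φ i j + φ j i := by
    intro i hi j hj
    have hi1 : 1 ≤ i := (Finset.mem_Ico.1 hi).1
    have hj1 : 1 ≤ j := (Finset.mem_Ico.1 hj).1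
    rcases lt_trichotomy i j with h | h | h
    · have hk := key i j hi hj h
      rw [hφ]
      simp only [if_pos h, if_neg (by omega : ¬ j < i)]
      linarith
    · subst h
      rw [hg, hφ]
      simp
    · have gsymm : g i j = g j i := by
        rw [hg]
        simp only
        rw [if_neg (by omega : ¬ i = j), if_neg (by omega : ¬ j = i), RH_symm]
        ring
      have hk := key j i hj hi h
      rw [gsymm, hφ]
      simp only [if_neg (by omega : ¬ i < j), if_pos h]
      have := hφ_nonneg i j hi1
      linarith
  have sum1 : ∑ i ∈ S, ∑ j ∈ S, g i j ≤ ∑ i ∈ S, ∑ j ∈ S, (φ i j + φ j i) := by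
    apply Finset.sum_le_sum
    intro i hi
    apply Finset.sum_le_sum
    intro j hj
    exact pointwise i hi j hj
  have sum2 : ∑ i ∈ S, ∑ j ∈ S, (φ i j + φ j i) = 2 * ∑ i ∈ S, ∑ j ∈ S, φ i j := by
    simp only [Finset.sum_add_distrib]
    rw [Finset.sum_comm (f := fun i j => φ j i)]
    ring
  have sum3 : ∑ i ∈ S, ∑ j ∈ S, φ i j = ∑ j ∈ S, ∑ i ∈ Finset.Ico 1 j, ψ i j := by
    rw [Finset.sum_comm]
    apply Finset.sum_congr rfl
    intro j hj
    have hjn : j < n := (Finset.mem_Ico.1 hj).2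
    rw [hφ]
    simp only
    rw [← Finset.sum_filter]
    congr 1
    rw [hS, Finset.Ico_filter_lt, min_eq_right hjn.le]
  have sum4 : ∀ j ∈ S, ∑ i ∈ Finset.Ico 1 j, ψ i j
      ≤ cK * (m:ℝ)^(-q) * (n:ℝ)^(2*H) * D * (j:ℝ)^(1-2*H) := by
    intro j hj
    have hj1 : 1 ≤ j := (Finset.mem_Ico.1 hj).1
    have hjR : (0:ℝ) < (j:ℝ) := by exact_mod_cast hj1
    have efac : ∑ i ∈ Finset.Ico 1 j, ψ i j
        = cK * (m:ℝ)^(-q) * (n:ℝ)^(2*H) * ((j:ℝ)^a * (j:ℝ)^(-H))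
          * ∑ i ∈ Finset.Ico 1 j, ((j:ℝ)-(i:ℝ))^(-a) * (i:ℝ)^(-H) := by
      rw [Finset.mul_sum]
      apply Finset.sum_congr rfl
      intro i _
      rw [hψ]
      ring
    rw [efac]
    have hpre : (0:ℝ) ≤ cK * (m:ℝ)^(-q) * (n:ℝ)^(2*H) * ((j:ℝ)^a * (j:ℝ)^(-H)) := by
      apply mul_nonneg (mul_nonneg (mul_nonneg hcK0.le hmq) (by positivity)) (by positivity)
    calc cK * (m:ℝ)^(-q) * (n:ℝ)^(2*H) * ((j:ℝ)^a * (j:ℝ)^(-H))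
          * ∑ i ∈ Finset.Ico 1 j, ((j:ℝ)-(i:ℝ))^(-a) * (i:ℝ)^(-H)
        ≤ cK * (m:ℝ)^(-q) * (n:ℝ)^(2*H) * ((j:ℝ)^a * (j:ℝ)^(-H)) * (D * (j:ℝ)^(1-a-H)) :=
          mul_le_mul_of_nonneg_left (inner_sum_le hH hH' ha0 ha1 j) hpre
      _ = cK * (m:ℝ)^(-q) * (n:ℝ)^(2*H) * D * (j:ℝ)^(1-2*H) := by
          have h1 : (j:ℝ)^a * (j:ℝ)^(-H) = (j:ℝ)^(a-H) := by
            rw [show a-H = a + -H from by ring, Real.rpow_add hjR]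
          have h2 : (j:ℝ)^(a-H) * (j:ℝ)^(1-a-H) = (j:ℝ)^(1-2*H) := by
            rw [show (1-2*H) = (a-H) + (1-a-H) from by ring, Real.rpow_add hjR]
          calc cK * (m:ℝ)^(-q) * (n:ℝ)^(2*H) * ((j:ℝ)^a * (j:ℝ)^(-H)) * (D * (j:ℝ)^(1-a-H))
              = cK * (m:ℝ)^(-q) * (n:ℝ)^(2*H) * D * (((j:ℝ)^a * (j:ℝ)^(-H)) * (j:ℝ)^(1-a-H)) := by
                ring
            _ = cK * (m:ℝ)^(-q) * (n:ℝ)^(2*H) * D * (j:ℝ)^(1-2*H) := by rw [h1, h2]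
  have sum5 : ∑ j ∈ S, ∑ i ∈ Finset.Ico 1 j, ψ i j
      ≤ cK * (m:ℝ)^(-q) * (n:ℝ)^(2*H) * D * (C3 * (n:ℝ)^(2-2*H)) := by
    calc ∑ j ∈ S, ∑ i ∈ Finset.Ico 1 j, ψ i j
        ≤ ∑ j ∈ S, cK * (m:ℝ)^(-q) * (n:ℝ)^(2*H) * D * (j:ℝ)^(1-2*H) :=
          Finset.sum_le_sum sum4
      _ = cK * (m:ℝ)^(-q) * (n:ℝ)^(2*H) * D * ∑ j ∈ S, (j:ℝ)^(1-2*H) := by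
          rw [Finset.mul_sum]
      _ ≤ cK * (m:ℝ)^(-q) * (n:ℝ)^(2*H) * D * (C3 * (n:ℝ)^(2-2*H)) := by
          apply mul_le_mul_of_nonneg_left
          · rw [hC3]; exact jsum_le hH hH' n
          · exact mul_nonneg (mul_nonneg (mul_nonneg hcK0.le hmq) (by positivity)) hD0.le
  -- final assembly
  have hn2 : (n:ℝ)^(2*H) * (n:ℝ)^(2-2*H) = (n:ℝ)^2 := by
    rw [← Real.rpow_add hnR, show (2*H+(2-2*H)) = (2:ℝ) by ring]
    rw [show ((2:ℝ)) = ((2:ℕ):ℝ) by norm_num, Real.rpow_natCast]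
  have final : ∑ i ∈ S, ∑ j ∈ S, g i j ≤ 2 * (cK * D * C3) * (m:ℝ)^(-q) * (n:ℝ)^2 := by
    calc ∑ i ∈ S, ∑ j ∈ S, g i j
        ≤ 2 * ∑ i ∈ S, ∑ j ∈ S, φ i j := by rw [← sum2]; exact sum1
      _ = 2 * ∑ j ∈ S, ∑ i ∈ Finset.Ico 1 j, ψ i j := by rw [sum3]
      _ ≤ 2 * (cK * (m:ℝ)^(-q) * (n:ℝ)^(2*H) * D * (C3 * (n:ℝ)^(2-2*H))) := by linarith [sum5]
      _ = 2 * (cK * D * C3) * (m:ℝ)^(-q) * ((n:ℝ)^(2*H) * (n:ℝ)^(2-2*H)) := by ring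
      _ = 2 * (cK * D * C3) * (m:ℝ)^(-q) * (n:ℝ)^2 := by rw [hn2]
  have hdbl : dblSum H m n = ((n:ℝ)^2)⁻¹ * ∑ i ∈ S, ∑ j ∈ S, g i j := by
    unfold dblSum
    rw [hS, hg]
  rw [hdbl]
  calc ((n:ℝ)^2)⁻¹ * ∑ i ∈ S, ∑ j ∈ S, g i j
      ≤ ((n:ℝ)^2)⁻¹ * (2 * (cK * D * C3) * (m:ℝ)^(-q) * (n:ℝ)^2) :=
        mul_le_mul_of_nonneg_left final (by positivity)
    _ = 2 * (cK * D * C3) * (m:ℝ)^(-q) := by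
        field_simp
    _ = 2 * (cK * D * C3) * (m:ℝ)^(-q) := rfl

lemma dblSum_zero_le {H : ℝ} (hH : 0 < H) (hH' : H < 1) (n : ℕ) :
    dblSum H 0 n ≤ (1/(1-H))^2 := by
  have h1H : (0:ℝ) < 1-H := by linarith
  rcases Nat.eq_zero_or_pos n with rfl | hn
  · unfold dblSum
    simp only [show Finset.Ico 1 0 = ∅ from Finset.Ico_eq_empty (by omega), Finset.sum_empty,
      mul_zero]
    positivity
  have hnR : (0:ℝ) < (n:ℝ) := by exact_mod_cast hn
  have hsum1 : ∑ i ∈ Finset.Ico 1 n, ((i:ℝ)/n)^(-H) ≤ (n:ℝ)/(1-H) := by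
    have e : ∀ i ∈ Finset.Ico 1 n, ((i:ℝ)/n)^(-H) = (n:ℝ)^H * (i:ℝ)^(-H) := by
      intro i hi
      have hiR : (0:ℝ) < (i:ℝ) := by exact_mod_cast (Finset.mem_Ico.1 hi).1
      exact div_rpow_neg hiR hnR
    rw [Finset.sum_congr rfl e, ← Finset.mul_sum]
    have hnn : (n:ℝ)^H * (n:ℝ)^(1-H) = (n:ℝ) := by
      rw [← Real.rpow_add hnR, show H + (1-H) = (1:ℝ) by ring, Real.rpow_one]
    calc (n:ℝ)^H * ∑ i ∈ Finset.Ico 1 n, (i:ℝ)^(-H)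
        ≤ (n:ℝ)^H * ((n:ℝ)^(1-H)/(1-H)) :=
          mul_le_mul_of_nonneg_left (sum_Ico_rpow_le hH.le hH' n) (by positivity)
      _ = (n:ℝ)/(1-H) := by rw [← mul_div_assoc, hnn]
  have hsum_nonneg : (0:ℝ) ≤ ∑ i ∈ Finset.Ico 1 n, ((i:ℝ)/n)^(-H) := by
    apply Finset.sum_nonneg
    intro i _
    positivity
  have hterm : ∀ i ∈ Finset.Ico 1 n, ∀ j ∈ Finset.Ico 1 n,
      (if i = j then 0 else
        RH H ((i : ℝ) / n) ((j : ℝ) / n) ^ (2 * 0) *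
          ((i : ℝ) / n) ^ (-(H * (2 * ((0:ℕ) : ℝ) + 1))) *
          ((j : ℝ) / n) ^ (-(H * (2 * ((0:ℕ) : ℝ) + 1))))
        ≤ ((i:ℝ)/n)^(-H) * ((j:ℝ)/n)^(-H) := by
    intro i _ j _
    by_cases h : i = j
    · rw [if_pos h]
      positivity
    · simp only [if_neg h, mul_zero, Nat.cast_zero, zero_add, mul_one, pow_zero, one_mul]
      exact le_refl _
  unfold dblSum
  have hb : ∑ i ∈ Finset.Ico 1 n, ∑ j ∈ Finset.Ico 1 n,
      (if i = j then 0 else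
        RH H ((i : ℝ) / n) ((j : ℝ) / n) ^ (2 * 0) *
          ((i : ℝ) / n) ^ (-(H * (2 * ((0:ℕ) : ℝ) + 1))) *
          ((j : ℝ) / n) ^ (-(H * (2 * ((0:ℕ) : ℝ) + 1))))
      ≤ ∑ i ∈ Finset.Ico 1 n, ∑ j ∈ Finset.Ico 1 n, ((i:ℝ)/n)^(-H) * ((j:ℝ)/n)^(-H) := by
    apply Finset.sum_le_sum
    intro i hi
    apply Finset.sum_le_sum
    intro j hj
    exact hterm i hi j hj
  have hprod : ∑ i ∈ Finset.Ico 1 n, ∑ j ∈ Finset.Ico 1 n, ((i:ℝ)/n)^(-H) * ((j:ℝ)/n)^(-H)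
      ≤ ((n:ℝ)/(1-H)) * ((n:ℝ)/(1-H)) := by
    rw [← Finset.sum_mul_sum]
    exact mul_le_mul hsum1 hsum1 hsum_nonneg (by positivity)
  calc ((n:ℝ)^2)⁻¹ * ∑ i ∈ Finset.Ico 1 n, ∑ j ∈ Finset.Ico 1 n,
      (if i = j then 0 else
        RH H ((i : ℝ) / n) ((j : ℝ) / n) ^ (2 * 0) *
          ((i : ℝ) / n) ^ (-(H * (2 * ((0:ℕ) : ℝ) + 1))) *
          ((j : ℝ) / n) ^ (-(H * (2 * ((0:ℕ) : ℝ) + 1))))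
      ≤ ((n:ℝ)^2)⁻¹ * (((n:ℝ)/(1-H)) * ((n:ℝ)/(1-H))) := by
        apply mul_le_mul_of_nonneg_left (le_trans hb hprod) (by positivity)
    _ = (1/(1-H))^2 := by
        field_simp

noncomputable def bb (m : ℕ) : ℝ := ((2*m).factorial : ℝ) / (4^m * ((m.factorial : ℝ))^2)

lemma bb_nonneg (m : ℕ) : 0 ≤ bb m := by
  unfold bb; positivity

lemma bb_sq (m : ℕ) : bb m ^ 2 * (2*(m:ℝ)+1) ≤ 1 := by
  induction m with
  | zero => unfold bb; norm_num
  | succ m ih =>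
    have hrec : bb (m+1) = bb m * ((2*(m:ℝ)+1)/(2*(m:ℝ)+2)) := by
      unfold bb
      have h1 : (2*(m+1)) = (2*m) + 1 + 1 := by ring
      rw [h1, Nat.factorial_succ, Nat.factorial_succ, Nat.factorial_succ]
      push_cast
      have h4 : ((4:ℝ))^(m+1) = 4^m * 4 := by ring
      field_simp
      ring
    rw [hrec]
    have hm1 : (0:ℝ) < 2*(m:ℝ)+1 := by positivity
    have hm2 : (0:ℝ) < 2*(m:ℝ)+2 := by positivity
    have key : (bb m * ((2*(m:ℝ)+1)/(2*(m:ℝ)+2)))^2 * (2*((m:ℕ):ℝ)+2+1)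
        ≤ bb m ^2 * (2*(m:ℝ)+1) * (((2*(m:ℝ)+1) * (2*(m:ℝ)+3)) / (2*(m:ℝ)+2)^2) := by
      rw [mul_pow, div_pow]
      push_cast
      rw [div_eq_mul_inv, div_eq_mul_inv]
      ring_nf
      nlinarith [sq_nonneg (bb m), sq_nonneg (2*(m:ℝ)+2)]
    push_cast
    calc (bb m * ((2*(m:ℝ)+1)/(2*(m:ℝ)+2)))^2 * (2*((m:ℝ)+1)+1)
        ≤ bb m ^2 * (2*(m:ℝ)+1) * (((2*(m:ℝ)+1) * (2*(m:ℝ)+3)) / (2*(m:ℝ)+2)^2) := by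
          push_cast at key ⊢; linarith [key]
      _ ≤ 1 * 1 := by
          apply mul_le_mul ih _ (by positivity) (by norm_num)
          rw [div_le_one (by positivity)]
          nlinarith
      _ = 1 := by norm_num

lemma Am_le (m : ℕ) : Cm m ^ 2 * ((Nat.factorial (2*m)) : ℝ) ≤ ((m:ℝ)+1) ^ (-(1/2:ℝ)) := by
  have hpi : (0:ℝ) < 2 * Real.pi := by positivity
  have heq : Cm m ^2 * ((Nat.factorial (2*m)):ℝ) = bb m * (1/(2*Real.pi)) := by
    unfold Cm bb
    have hs : (Real.sqrt (2*Real.pi))^2 = 2*Real.pi := Real.sq_sqrt hpi.le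
    have h4 : ((2:ℝ)^m)^2 = 4^m := by
      rw [← pow_mul, mul_comm m 2, pow_mul]; norm_num
    have hfm : (0:ℝ) < (m.factorial : ℝ) := by exact_mod_cast m.factorial_pos
    have hsq : (0:ℝ) < Real.sqrt (2*Real.pi) := Real.sqrt_pos.2 hpi
    field_simp
    rw [hs, h4]
  rw [heq]
  have h1 : bb m ^2 * ((m:ℝ)+1) ≤ 1 := by
    have h2 := bb_sq m
    have h3 := bb_nonneg m
    nlinarith [sq_nonneg (bb m), Nat.cast_nonneg (α := ℝ) m]
  set y : ℝ := ((m:ℝ)+1) ^ ((1:ℝ)/2) with hy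
  have hy0 : 0 < y := Real.rpow_pos_of_pos (by positivity) _
  have hysq : y^2 = (m:ℝ)+1 := by
    rw [hy, ← Real.rpow_natCast (((m:ℝ)+1) ^ ((1:ℝ)/2)) 2, ← Real.rpow_mul (by positivity)]
    norm_num
  have h2 : (bb m * y)^2 ≤ 1 := by rw [mul_pow, hysq]; exact h1
  have h3 : bb m * y ≤ 1 := by nlinarith [mul_nonneg (bb_nonneg m) hy0.le]
  have hb1 : bb m * (1/(2*Real.pi)) ≤ bb m := by
    have hp1 : 1/(2*Real.pi) ≤ 1 := by
      rw [div_le_one hpi]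
      nlinarith [Real.pi_gt_three]
    nlinarith [bb_nonneg m]
  calc bb m * (1/(2*Real.pi)) ≤ bb m := hb1
    _ = bb m * y * y⁻¹ := by field_simp
    _ ≤ 1 * y⁻¹ := mul_le_mul_of_nonneg_right h3 (by positivity)
    _ = ((m:ℝ)+1) ^ (-(1/2:ℝ)) := by
        rw [one_mul, hy, ← Real.rpow_neg (by positivity)]

lemma dblSum_bound {H : ℝ} (hH : 0 < H) (hH' : H < 1) :
    ∃ K : ℝ, 0 ≤ K ∧ ∀ m n : ℕ, dblSum H m n ≤ K * ((m:ℝ)+1) ^ (-((1+H)/(4*H))) := by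
  set q : ℝ := (1+H)/(4*H) with hq
  have hq0 : 0 < q := by rw [hq]; positivity
  set K1 : ℝ :=
    2 * ((((Nat.ceil ((1+H)/(4*H))).factorial + 1 : ℝ) * (2/(2 - (2:ℝ)^H)) ^ ((1+H)/(4*H)))
      * ((2:ℝ)^((1+H)/2)/(1-H) + (2:ℝ)^H/(1-(1+H)/2)) * (1/(2-2*H)+1)) with hK1def
  have hK10 : 0 ≤ K1 := by
    have h := dblSum_le_aux hH hH' le_rfl 0
    have hz : dblSum H 1 0 = 0 := by
      unfold dblSum
      simp [show Finset.Ico 1 0 = ∅ from Finset.Ico_eq_empty (by omega)]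
    rw [hz] at h
    have h1 : (((1:ℕ)):ℝ) ^ (-((1+H)/(4*H))) = 1 := by norm_num
    rw [h1, mul_one] at h
    exact h
  set K0 : ℝ := (1/(1-H))^2 with hK0def
  have hK00 : 0 ≤ K0 := by positivity
  refine ⟨max K0 (K1 * 2^q), le_trans hK00 (le_max_left _ _), ?_⟩
  intro m n
  have hmq1 : (0:ℝ) ≤ ((m:ℝ)+1) ^ (-q) := Real.rpow_nonneg (by positivity) _
  rcases Nat.eq_zero_or_pos m with rfl | hm
  · have h := dblSum_zero_le hH hH' n
    have e1 : (((0:ℕ):ℝ)+1) ^ (-q) = 1 := by norm_num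
    calc dblSum H 0 n ≤ K0 := h
      _ = K0 * (((0:ℕ):ℝ)+1) ^ (-q) := by rw [e1, mul_one]
      _ ≤ max K0 (K1 * 2^q) * (((0:ℕ):ℝ)+1) ^ (-q) :=
          mul_le_mul_of_nonneg_right (le_max_left _ _) (by rw [e1]; norm_num)
  · have h := dblSum_le_aux hH hH' hm n
    have hmR : (0:ℝ) < (m:ℝ) := by exact_mod_cast hm
    have h2 : (m:ℝ) ^ (-q) ≤ 2^q * ((m:ℝ)+1) ^ (-q) := by
      apply inv_rpow_le2 hq0.le (by positivity) hmR
      have : (1:ℝ) ≤ (m:ℝ) := by exact_mod_cast hm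
      linarith
    calc dblSum H m n ≤ K1 * (m:ℝ) ^ (-q) := h
      _ ≤ K1 * (2^q * ((m:ℝ)+1) ^ (-q)) := mul_le_mul_of_nonneg_left h2 hK10
      _ = (K1 * 2^q) * ((m:ℝ)+1) ^ (-q) := by ring
      _ ≤ max K0 (K1 * 2^q) * ((m:ℝ)+1) ^ (-q) :=
          mul_le_mul_of_nonneg_right (le_max_right _ _) hmq1

theorem statement11 (H : ℝ) (hH : 0 < H) (hH' : H < 1) :
    (∑' m : ℕ, ENNReal.ofReal ((Cm m) ^ 2 * (Nat.factorial (2 * m))) *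
        ⨆ (n : ℕ) (_ : 2 ≤ n), ENNReal.ofReal (dblSum H m n)) < ⊤ := by
  obtain ⟨K, hK0, hK⟩ := dblSum_bound hH hH'
  set q : ℝ := (1+H)/(4*H) with hq
  have hq12 : 1/2 < q := by
    rw [hq, lt_div_iff₀ (by positivity)]
    nlinarith
  set f : ℕ → ℝ := fun m => (Cm m ^ 2 * ((Nat.factorial (2*m)) : ℝ)) * (K * ((m:ℝ)+1) ^ (-q))
    with hf
  have hA_nonneg : ∀ m : ℕ, (0:ℝ) ≤ Cm m ^ 2 * ((Nat.factorial (2*m)) : ℝ) := by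
    intro m; positivity
  have hf_nonneg : ∀ m : ℕ, 0 ≤ f m := by
    intro m
    exact mul_nonneg (hA_nonneg m) (mul_nonneg hK0 (Real.rpow_nonneg (by positivity) _))
  have hf_le : ∀ m : ℕ, f m ≤ K * ((m:ℝ)+1) ^ (-(1/2+q)) := by
    intro m
    have h1 : (0:ℝ) < (m:ℝ)+1 := by positivity
    have hsplit : ((m:ℝ)+1) ^ (-(1/2+q)) = ((m:ℝ)+1) ^ (-(1/2:ℝ)) * ((m:ℝ)+1) ^ (-q) := by
      rw [← Real.rpow_add h1]; congr 1; ring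
    calc f m ≤ (((m:ℝ)+1) ^ (-(1/2:ℝ))) * (K * ((m:ℝ)+1) ^ (-q)) := by
          apply mul_le_mul_of_nonneg_right (Am_le m)
          exact mul_nonneg hK0 (Real.rpow_nonneg h1.le _)
      _ = K * ((m:ℝ)+1) ^ (-(1/2+q)) := by rw [hsplit]; ring
  have hgsum : Summable (fun m : ℕ => K * ((m:ℝ)+1) ^ (-(1/2+q))) := by
    apply Summable.mul_left
    have h1 : Summable (fun n : ℕ => ((n:ℝ)) ^ (-(1/2+q))) :=
      Real.summable_nat_rpow.2 (by linarith)
    have h2 := (summable_nat_add_iff 1).2 h1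
    refine h2.congr ?_
    intro n
    push_cast
    rfl
  have hfsum : Summable f := Summable.of_nonneg_of_le hf_nonneg hf_le hgsum
  have hterm : ∀ m : ℕ,
      ENNReal.ofReal ((Cm m) ^ 2 * (Nat.factorial (2 * m))) *
        (⨆ (n : ℕ) (_ : 2 ≤ n), ENNReal.ofReal (dblSum H m n)) ≤ ENNReal.ofReal (f m) := by
    intro m
    have hsup : (⨆ (n : ℕ) (_ : 2 ≤ n), ENNReal.ofReal (dblSum H m n))
        ≤ ENNReal.ofReal (K * ((m:ℝ)+1) ^ (-q)) := by
      apply iSup_le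
      intro n
      apply iSup_le
      intro _
      exact ENNReal.ofReal_le_ofReal (hK m n)
    calc ENNReal.ofReal ((Cm m) ^ 2 * (Nat.factorial (2 * m))) *
          (⨆ (n : ℕ) (_ : 2 ≤ n), ENNReal.ofReal (dblSum H m n))
        ≤ ENNReal.ofReal ((Cm m) ^ 2 * (Nat.factorial (2 * m))) *
          ENNReal.ofReal (K * ((m:ℝ)+1) ^ (-q)) := mul_le_mul_right hsup _
      _ = ENNReal.ofReal (f m) := by
          rw [← ENNReal.ofReal_mul (hA_nonneg m)]
  calc (∑' m : ℕ, ENNReal.ofReal ((Cm m) ^ 2 * (Nat.factorial (2 * m))) *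
        ⨆ (n : ℕ) (_ : 2 ≤ n), ENNReal.ofReal (dblSum H m n))
      ≤ ∑' m : ℕ, ENNReal.ofReal (f m) := ENNReal.tsum_le_tsum hterm
    _ = ENNReal.ofReal (∑' m : ℕ, f m) := (ENNReal.ofReal_tsum_of_nonneg hf_nonneg hfsum).symm
    _ < ⊤ := ENNReal.ofReal_lt_top
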